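/- Let H = H_{k_1,…,k_n} be a Hamming graph with root 0^n and let G be an isometric daisy graph of H with respect to 0^n. Then any daisy peripheral expansion of G relative to sets W_0 = V(G), W_1, …, W_l (where each ⟨W_i⟩ is a daisy graph of H with respect to 0^n) is an isometric daisy graph of the Hamming graph H' = K_{l+1} □ H with respect to 0^{n+1}. -/

import Mathlib

open SimpleGraph

namespace Daisy

variable {V : Type*}

/-- The interval `I_G(u,v)`: vertices lying on shortest `u,v`-paths. -/
def interval (G : SimpleGraph V) (u v : V) : Set V :=
  {x | G.dist u x + G.dist x v = G.dist u v}

/-- The vertex set of the daisy graph of `G` with respect to the root `r`, generated by `X`. -/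
def daisySet (G : SimpleGraph V) (r : V) (X : Set V) : Set V :=
  ⋃ v ∈ X, interval G r v

/-- The subgraph of `G` induced by `S` is an isometric subgraph of `G`. -/
def IsIsometricSubset (G : SimpleGraph V) (S : Set V) : Prop :=
  ∀ u v : S, (G.induce S).dist u v = G.dist u.1 v.1

/-- Some shortest `u,v`-path of `G` contains both `x` and `y`. -/
def OnShortestPath (G : SimpleGraph V) (u v x y : V) : Prop :=
  ∃ p : G.Walk u v, p.length = G.dist u v ∧ x ∈ p.support ∧ y ∈ p.support

/-- Conditions 1 and 2 of the definition of a pseudo-median `(x,y,z)` of the triple `(u,v,w)`. -/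
def PseudoMedianConds (G : SimpleGraph V) (u v w x y z : V) : Prop :=
  OnShortestPath G u v x y ∧ OnShortestPath G v w y z ∧ OnShortestPath G u w x z ∧
  G.dist x y = G.dist y z ∧ G.dist y z = G.dist x z

/-- `(x,y,z)` is a pseudo-median of the triple `(u,v,w)` in `G`:
it satisfies the path and equidistance conditions, and `d(x,y)` is minimal under them. -/
def IsPseudoMedian (G : SimpleGraph V) (u v w x y z : V) : Prop :=
  PseudoMedianConds G u v w x y z ∧
  ∀ x' y' z' : V, PseudoMedianConds G u v w x' y' z' → G.dist x y ≤ G.dist x' y'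

/-- The triple `(u,v,w)` has a pseudo-median of size `s` in `G`. -/
def HasPseudoMedianOfSize (G : SimpleGraph V) (u v w : V) (s : ℕ) : Prop :=
  ∃ x y z : V, IsPseudoMedian G u v w x y z ∧ G.dist x y = s

/-- The Hamming graph with factors `K_{k i}`: vertices are tuples, two vertices being
adjacent iff they differ in exactly one coordinate. -/
def hammingGraph {ι : Type*} (k : ι → ℕ) : SimpleGraph (∀ i, Fin (k i)) where
  Adj u v := ∃! i, u i ≠ v i
  symm := by
    constructor
    rintro u v ⟨i, hi, hu⟩
    exact ⟨i, Ne.symm hi, fun j hj => hu j (Ne.symm hj)⟩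
  loopless := by
    constructor
    rintro u ⟨i, hi, -⟩
    exact hi rfl

/-- The all-zeros vertex `0^n` of a Hamming graph. -/
def hroot {ι : Type*} (k : ι → ℕ) (hk : ∀ i, 0 < k i) : ∀ i, Fin (k i) :=
  fun i => ⟨0, hk i⟩

/-- `S` is the vertex set of a daisy graph of `G` with respect to the root `r`. -/
def IsDaisySet (G : SimpleGraph V) (r : V) (S : Set V) : Prop :=
  ∃ X : Set V, S = daisySet G r X

/-- `G` is (isomorphic to) an isometric daisy graph of `H` with respect to the root `r`. -/
def IsIsometricDaisyGraphOf {U : Type*} (G : SimpleGraph U) (H : SimpleGraph V) (r : V) : Prop :=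
  ∃ S : Set V, IsDaisySet H r S ∧ IsIsometricSubset H S ∧ Nonempty (G ≃g H.induce S)

/-- The family `W` of subsets of `V(G)` satisfies the conditions of Chepoi's definition of
an expansion: pairwise intersecting, covering, no edges between `W i \\ W j` and `W j \\ W i`,
and the subgraphs induced by `W i` and by `W i ∪ W j` are isometric in `G`. -/
def ExpansionFamily (G : SimpleGraph V) {m : ℕ} (W : Fin m → Set V) : Prop :=
  (∀ i j, (W i ∩ W j).Nonempty) ∧
  (⋃ i, W i) = Set.univ ∧
  (∀ i j, ∀ x ∈ W i \ W j, ∀ y ∈ W j \ W i, ¬ G.Adj x y) ∧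
  (∀ i, IsIsometricSubset G (W i)) ∧
  (∀ i j, IsIsometricSubset G (W i ∪ W j))

/-- The expansion of `G` relative to the family `W`: each vertex `x` is replaced by a clique
on the indices `i` with `x ∈ W i`, and copies with equal index of adjacent vertices are joined. -/
def expansionGraph (G : SimpleGraph V) {m : ℕ} (W : Fin m → Set V) :
    SimpleGraph {p : Fin m × V // p.2 ∈ W p.1} where
  Adj p q := (p.1.1 = q.1.1 ∧ G.Adj p.1.2 q.1.2) ∨ (p.1.1 ≠ q.1.1 ∧ p.1.2 = q.1.2)
  symm := by
    constructor
    rintro p q (⟨h1, h2⟩ | ⟨h1, h2⟩)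
    · exact Or.inl ⟨h1.symm, h2.symm⟩
    · exact Or.inr ⟨Ne.symm h1, h2.symm⟩
  loopless := by
    constructor
    rintro p (⟨-, h⟩ | ⟨h, -⟩)
    · exact G.loopless.irrefl _ h
    · exact h rfl


section Aux

open SimpleGraph Walk

variable {V U α β : Type*}

/-- Any walk of an induced subgraph maps to a walk of the ambient graph of equal length,
so ambient distances are bounded by induced walk lengths. -/
lemma dist_le_induce_walk {A : SimpleGraph V} {s : Set V} {a b : ↥s}
    (p : (A.induce s).Walk a b) : A.dist a.1 b.1 ≤ p.length := by
  have := SimpleGraph.dist_le (p.map (SimpleGraph.Embedding.induce s).toHom)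
  rw [Walk.length_map] at this
  simpa [Walk.length_map] using this

lemma hamming_reachable {n : ℕ} {k : Fin n → ℕ} (u v : ∀ i, Fin (k i)) :
    (hammingGraph k).Reachable u v := by
  classical
  have key : ∀ (c : ℕ) (u v : ∀ i, Fin (k i)),
      (Finset.univ.filter fun i => u i ≠ v i).card = c → (hammingGraph k).Reachable u v := by
    intro c
    induction c with
    | zero =>
      intro u v h
      have huv : u = v := by
        funext i
        by_contra hi
        have hmem : i ∈ Finset.univ.filter fun i => u i ≠ v i :=
          Finset.mem_filter.mpr ⟨Finset.mem_univ _, hi⟩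
        rw [Finset.card_eq_zero] at h
        simp [h] at hmem
      exact huv ▸ Reachable.refl _
    | succ c ih =>
      intro u v h
      have hne : (Finset.univ.filter fun i => u i ≠ v i).Nonempty :=
        Finset.card_pos.mp (by omega)
      obtain ⟨i, hi⟩ := hne
      have hiv : u i ≠ v i := (Finset.mem_filter.mp hi).2
      have hadj : (hammingGraph k).Adj u (Function.update u i (v i)) := by
        refine ⟨i, ?_, ?_⟩
        · simpa using hiv
        · intro j hj
          by_contra hji
          exact hj (by simp [Function.update_of_ne hji])
      have hcard : (Finset.univ.filter fun j => Function.update u i (v i) j ≠ v j).card = c := by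
        have hset : (Finset.univ.filter fun j => Function.update u i (v i) j ≠ v j)
            = (Finset.univ.filter fun j => u j ≠ v j).erase i := by
          ext j
          simp only [Finset.mem_filter, Finset.mem_erase, Finset.mem_univ, true_and]
          constructor
          · intro hj
            rcases eq_or_ne j i with rfl | hji
            · simp at hj
            · exact ⟨hji, by simpa [Function.update_of_ne hji] using hj⟩
          · rintro ⟨hji, hj⟩
            simpa [Function.update_of_ne hji] using hj
        rw [hset, Finset.card_erase_of_mem hi, h]
        omega
      exact hadj.reachable.trans (ih _ v hcard)
  exact key _ u v rfl

lemma boxProd_dist_le_walk {G : SimpleGraph α} {H : SimpleGraph β}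
    (hG : G.Connected) (hH : H.Connected) :
    ∀ {x y : α × β} (p : (G □ H).Walk x y), G.dist x.1 y.1 + H.dist x.2 y.2 ≤ p.length := by
  intro x y p
  induction p with
  | nil => simp
  | @cons a b c h q ih =>
    rw [Walk.length_cons]
    rcases (boxProd_adj.mp h) with ⟨h1, h2⟩ | ⟨h1, h2⟩
    · have h3 : G.dist a.1 b.1 = 1 := dist_eq_one_iff_adj.mpr h1
      have h4 : G.dist a.1 c.1 ≤ G.dist a.1 b.1 + G.dist b.1 c.1 := hG.dist_triangle
      rw [h2]
      omega
    · have h3 : H.dist a.2 b.2 = 1 := dist_eq_one_iff_adj.mpr h1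
      have h4 : H.dist a.2 c.2 ≤ H.dist a.2 b.2 + H.dist b.2 c.2 := hH.dist_triangle
      rw [h2]
      omega

lemma boxProd_dist {G : SimpleGraph α} {H : SimpleGraph β}
    (hG : G.Connected) (hH : H.Connected) (x y : α × β) :
    (G □ H).dist x y = G.dist x.1 y.1 + H.dist x.2 y.2 := by
  obtain ⟨a, b⟩ := x; obtain ⟨c, d⟩ := y
  refine le_antisymm ?_ ?_
  · obtain ⟨p, hp⟩ := hG.exists_walk_length_eq_dist a c
    obtain ⟨q, hq⟩ := hH.exists_walk_length_eq_dist b d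
    have := SimpleGraph.dist_le ((p.boxProdLeft H b).append (q.boxProdRight G c))
    have e1 : (p.boxProdLeft H b).length = p.length := Walk.length_map _ _
    have e2 : (q.boxProdRight G c).length = q.length := Walk.length_map _ _
    rw [Walk.length_append, e1, e2] at this
    simpa [Walk.boxProdLeft, Walk.boxProdRight, Walk.length_append, Walk.length_map, hp, hq]
      using this
  · obtain ⟨p, hp⟩ := (hG.boxProd hH).exists_walk_length_eq_dist (a, b) (c, d)
    rw [← hp]
    exact boxProd_dist_le_walk hG hH p

lemma interval_boxProd {G : SimpleGraph α} {H : SimpleGraph β}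
    (hG : G.Connected) (hH : H.Connected) (u v : α × β) :
    interval (G □ H) u v = (interval G u.1 v.1) ×ˢ (interval H u.2 v.2) := by
  ext ⟨a, b⟩
  simp only [interval, Set.mem_setOf_eq, Set.mem_prod]
  rw [boxProd_dist hG hH, boxProd_dist hG hH, boxProd_dist hG hH]
  dsimp only
  have t1 : G.dist u.1 v.1 ≤ G.dist u.1 a + G.dist a v.1 := hG.dist_triangle
  have t2 : H.dist u.2 v.2 ≤ H.dist u.2 b + H.dist b v.2 := hH.dist_triangle
  constructor
  · intro h; constructor <;> omega
  · rintro ⟨h1, h2⟩; omega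

lemma interval_top {γ : Type*} [DecidableEq γ] (a b : γ) :
    interval (⊤ : SimpleGraph γ) a b = {a, b} := by
  ext x
  simp only [interval, Set.mem_setOf_eq, Set.mem_insert_iff, Set.mem_singleton_iff, dist_top]
  by_cases h1 : a = x
  · subst h1; simp
  · by_cases h2 : x = b
    · subst h2; simp [h1, Ne.symm h1]
    · by_cases h3 : a = b
      · subst h3; simp [h1, h2, Ne.symm h1]
      · simp [h1, h2, h3, Ne.symm h1]

lemma exists_layer_walk {A : SimpleGraph V} {B : SimpleGraph U} {Wi : Set V}
    (f : ↥Wi → U) (hf : ∀ x y : ↥Wi, A.Adj x.1 y.1 → B.Adj (f x) (f y))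
    (hiso : ∀ u v : ↥Wi, (A.induce Wi).dist u v = A.dist u.1 v.1)
    (x y : ↥Wi) (hpos : x.1 ≠ y.1 → A.dist x.1 y.1 ≠ 0) :
    ∃ q : B.Walk (f x) (f y), q.length ≤ A.dist x.1 y.1 := by
  by_cases hxy : x = y
  · subst hxy; exact ⟨Walk.nil, by simp⟩
  · have hne : x.1 ≠ y.1 := fun h => hxy (Subtype.ext h)
    have hd : (A.induce Wi).dist x y ≠ 0 := by rw [hiso]; exact hpos hne
    obtain ⟨p, hp⟩ := exists_walk_of_dist_ne_zero hd
    exact ⟨p.map ⟨f, fun {a b} h => hf a b h⟩, by rw [Walk.length_map, hp, hiso]⟩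

lemma exists_cross_walk {A : SimpleGraph V} {B : SimpleGraph U} {Wi Wj : Set V}
    (hsep : ∀ x ∈ Wi \ Wj, ∀ y ∈ Wj \ Wi, ¬ A.Adj x y)
    (fi : ↥Wi → U) (fj : ↥Wj → U)
    (hfi : ∀ x y : ↥Wi, A.Adj x.1 y.1 → B.Adj (fi x) (fi y))
    (hjump : ∀ (x : V) (h1 : x ∈ Wi) (h2 : x ∈ Wj), B.Adj (fi ⟨x, h1⟩) (fj ⟨x, h2⟩))
    (hlayerj : ∀ (x y : ↥Wj) (m : ℕ), A.dist x.1 y.1 ≤ m →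
      ∃ q : B.Walk (fj x) (fj y), q.length ≤ m) :
    ∀ {a b : ↥(Wi ∪ Wj)} (p : (A.induce (Wi ∪ Wj)).Walk a b)
      (ha : a.1 ∈ Wi) (hb : b.1 ∈ Wj),
      ∃ q : B.Walk (fi ⟨a.1, ha⟩) (fj ⟨b.1, hb⟩), q.length ≤ p.length + 1 := by
  intro a b p
  induction p with
  | nil =>
    intro ha hb
    exact ⟨(hjump _ ha hb).toWalk, by simp [SimpleGraph.Adj.toWalk]⟩
  | @cons a z b h q ih =>
    intro ha hb
    by_cases hz : z.1 ∈ Wi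
    · obtain ⟨q', hq'⟩ := ih hz hb
      have hadj : B.Adj (fi ⟨a.1, ha⟩) (fi ⟨z.1, hz⟩) := hfi _ _ h
      refine ⟨Walk.cons hadj q', ?_⟩
      simp only [Walk.length_cons]
      omega
    · have hzj : z.1 ∈ Wj := z.2.resolve_left hz
      have haj : a.1 ∈ Wj := by
        by_contra haj
        exact hsep a.1 ⟨ha, haj⟩ z.1 ⟨hzj, hz⟩ h
      have hdist : A.dist a.1 b.1 ≤ q.length + 1 := by
        have := dist_le_induce_walk (Walk.cons h q)
        simpa using this
      obtain ⟨q', hq'⟩ := hlayerj ⟨a.1, haj⟩ ⟨b.1, hb⟩ (q.length + 1) hdist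
      refine ⟨Walk.cons (hjump a.1 ha haj) q', ?_⟩
      simp only [Walk.length_cons]
      omega

end Aux

/-- If `G` is an isometric daisy graph (with vertex set `S`) of a Hamming
graph `H` with respect to the root `0^n`, then any daisy peripheral expansion of `G` relative
to sets `W 0 = V(G), W 1, …, W l` (each inducing a daisy graph of `H` w.r.t. `0^n`) is an
isometric daisy graph of `K_{l+1} □ H` with respect to `0^{n+1}`. -/
theorem daisy_peripheral_expansion_isometric_daisy
    (n : ℕ) (k : Fin n → ℕ) (hk : ∀ i, 0 < k i)
    (S : Set (∀ i, Fin (k i)))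
    (hdaisy : IsDaisySet (hammingGraph k) (hroot k hk) S)
    (hisom : IsIsometricSubset (hammingGraph k) S)
    (l : ℕ) (W : Fin (l + 1) → Set S)
    (hW0 : W 0 = Set.univ)
    (hexp : ExpansionFamily ((hammingGraph k).induce S) W)
    (hWdaisy : ∀ i, IsDaisySet (hammingGraph k) (hroot k hk) (Subtype.val '' W i)) :
    IsIsometricDaisyGraphOf (expansionGraph ((hammingGraph k).induce S) W)
      ((⊤ : SimpleGraph (Fin (l + 1))) □ hammingGraph k) ((0 : Fin (l + 1)), hroot k hk) := by
  classical
  obtain ⟨hexp1, hexp2, hexp3, hexp4, hexp5⟩ := hexp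
  set G := hammingGraph k with hGdef
  set r := hroot k hk with hrdef
  have hGconn : G.Connected := by
    rw [connected_iff]
    exact ⟨fun u v => hamming_reachable u v, ⟨r⟩⟩
  have hTconn : (⊤ : SimpleGraph (Fin (l + 1))).Connected := connected_top
  have hBconn : ((⊤ : SimpleGraph (Fin (l + 1))) □ G).Connected := hTconn.boxProd hGconn
  set S' : Set (Fin (l + 1) × (∀ i, Fin (k i))) :=
    {p | ∃ h : p.2 ∈ S, (⟨p.2, h⟩ : S) ∈ W p.1} with hS'def
  have hmem : ∀ (j : Fin (l + 1)) (c : ∀ i, Fin (k i)),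
      ((j, c) ∈ S') ↔ c ∈ Subtype.val '' W j := by
    intro j c
    constructor
    · rintro ⟨h, hw⟩; exact ⟨⟨c, h⟩, hw, rfl⟩
    · rintro ⟨a, ha, rfl⟩; exact ⟨a.2, ha⟩
  -- the layer maps
  have fmem : ∀ (i : Fin (l + 1)) (a : ↥(W i)), ((i, a.1.1) : Fin (l + 1) × _) ∈ S' :=
    fun i a => ⟨a.1.2, a.2⟩
  let fι : ∀ i : Fin (l + 1), ↥(W i) → ↥S' := fun i a => ⟨(i, a.1.1), fmem i a⟩
  have hfι : ∀ (i : Fin (l + 1)) (x y : ↥(W i)),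
      (G.induce S).Adj x.1 y.1 →
      ((((⊤ : SimpleGraph (Fin (l + 1))) □ G).induce S')).Adj (fι i x) (fι i y) :=
    fun i x y h => Or.inr ⟨h, rfl⟩
  have hpos : ∀ x y : ↥S, x ≠ y → (G.induce S).dist x y ≠ 0 := by
    intro x y hxy
    rw [hisom x y]
    have : x.1 ≠ y.1 := fun h => hxy (Subtype.ext h)
    have := hGconn.pos_dist_of_ne this
    omega
  have hlayer : ∀ (i : Fin (l + 1)) (x y : ↥(W i)),
      ∃ q : ((((⊤ : SimpleGraph (Fin (l + 1))) □ G).induce S')).Walk (fι i x) (fι i y),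
        q.length ≤ G.dist x.1.1 y.1.1 := by
    intro i x y
    have := exists_layer_walk (fι i) (hfι i) (hexp4 i) x y (hpos x.1 y.1)
    rwa [hisom x.1 y.1] at this
  refine ⟨S', ?_, ?_, ?_⟩
  · -- daisy set
    choose X hX using hWdaisy
    refine ⟨{p | p.2 ∈ X p.1}, ?_⟩
    ext ⟨j, c⟩
    rw [hmem j c]
    simp only [daisySet, Set.mem_iUnion, Set.mem_setOf_eq]
    constructor
    · intro hc
      rw [hX j] at hc
      simp only [daisySet, Set.mem_iUnion] at hc
      obtain ⟨v, hv, hcv⟩ := hc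
      refine ⟨(j, v), hv, ?_⟩
      rw [interval_boxProd hTconn hGconn]
      exact ⟨by rw [interval_top]; exact Or.inr rfl, hcv⟩
    · rintro ⟨⟨i, v⟩, hv, hint⟩
      rw [interval_boxProd hTconn hGconn] at hint
      obtain ⟨hj, hcv⟩ := hint
      rw [interval_top] at hj
      simp only [Set.mem_insert_iff, Set.mem_singleton_iff] at hj
      dsimp only at hj hcv hv
      have hcWi : c ∈ Subtype.val '' W i := by
        rw [hX i]
        simp only [daisySet, Set.mem_iUnion]
        exact ⟨v, hv, hcv⟩
      rcases hj with rfl | rfl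
      · have hcS : c ∈ S := by
          obtain ⟨a, -, rfl⟩ := hcWi
          exact a.2
        rw [hW0, Set.image_univ, Subtype.range_coe]
        exact hcS
      · exact hcWi
  · -- isometric
    rintro ⟨⟨i, x⟩, hu⟩ ⟨⟨j, y⟩, hv⟩
    obtain ⟨hxS, hxW⟩ := id hu
    obtain ⟨hyS, hyW⟩ := id hv
    have key : ∃ q : ((((⊤ : SimpleGraph (Fin (l + 1))) □ G).induce S')).Walk
        ⟨(i, x), hu⟩ ⟨(j, y), hv⟩,
        q.length ≤ (⊤ : SimpleGraph (Fin (l + 1))).dist i j + G.dist x y := by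
      by_cases hij : i = j
      · subst hij
        obtain ⟨q, hq⟩ := hlayer i ⟨⟨x, hxS⟩, hxW⟩ ⟨⟨y, hyS⟩, hyW⟩
        exact ⟨q, by simp only [SimpleGraph.dist_self, Nat.zero_add]; exact hq⟩
      · have hjump : ∀ (z : ↥S) (h1 : z ∈ W i) (h2 : z ∈ W j),
            ((((⊤ : SimpleGraph (Fin (l + 1))) □ G).induce S')).Adj
              (fι i ⟨z, h1⟩) (fι j ⟨z, h2⟩) :=
          fun z h1 h2 => Or.inl ⟨hij, rfl⟩
        have hlayerj : ∀ (a b : ↥(W j)) (m : ℕ), (G.induce S).dist a.1 b.1 ≤ m →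
            ∃ q : ((((⊤ : SimpleGraph (Fin (l + 1))) □ G).induce S')).Walk
              (fι j a) (fι j b), q.length ≤ m := by
          intro a b m hm
          obtain ⟨q, hq⟩ := hlayer j a b
          rw [hisom a.1 b.1] at hm
          exact ⟨q, hq.trans hm⟩
        -- geodesic in the union
        have hxU : (⟨x, hxS⟩ : ↥S) ∈ W i ∪ W j := Or.inl hxW
        have hyU : (⟨y, hyS⟩ : ↥S) ∈ W i ∪ W j := Or.inr hyW
        have hgeo : ∃ p : ((G.induce S).induce (W i ∪ W j)).Walk ⟨⟨x, hxS⟩, hxU⟩ ⟨⟨y, hyS⟩, hyU⟩,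
            p.length ≤ G.dist x y := by
          by_cases hxy : (⟨x, hxS⟩ : ↥S) = ⟨y, hyS⟩
          · have hxy' : (⟨⟨x, hxS⟩, hxU⟩ : ↥(W i ∪ W j)) = ⟨⟨y, hyS⟩, hyU⟩ :=
              Subtype.ext hxy
            exact ⟨Walk.nil.copy rfl hxy', by simp⟩
          · have hd : ((G.induce S).induce (W i ∪ W j)).dist ⟨⟨x, hxS⟩, hxU⟩ ⟨⟨y, hyS⟩, hyU⟩ ≠ 0 := by
              rw [hexp5 i j ⟨⟨x, hxS⟩, hxU⟩ ⟨⟨y, hyS⟩, hyU⟩]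
              exact hpos _ _ hxy
            obtain ⟨p, hp⟩ := exists_walk_of_dist_ne_zero hd
            refine ⟨p, ?_⟩
            rw [hp, hexp5 i j ⟨⟨x, hxS⟩, hxU⟩ ⟨⟨y, hyS⟩, hyU⟩, hisom]
        obtain ⟨p, hp⟩ := hgeo
        obtain ⟨q, hq⟩ := exists_cross_walk (hexp3 i j) (fι i) (fι j) (hfι i) hjump hlayerj
          p hxW hyW
        refine ⟨q, ?_⟩
        rw [dist_top_of_ne hij]
        omega
    obtain ⟨q, hq⟩ := key
    refine le_antisymm ((SimpleGraph.dist_le q).trans ?_) ?_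
    · rw [boxProd_dist hTconn hGconn, dist_top]
      rw [dist_top] at hq
      exact hq
    · have hreach : ((((⊤ : SimpleGraph (Fin (l + 1))) □ G).induce S')).Reachable
        ⟨(i, x), hu⟩ ⟨(j, y), hv⟩ := ⟨q⟩
      obtain ⟨p, hp⟩ := hreach.exists_walk_length_eq_dist
      rw [← hp]
      exact dist_le_induce_walk p
  · -- isomorphism
    let f : {p : Fin (l + 1) × ↥S // p.2 ∈ W p.1} → ↥S' :=
      fun p => ⟨(p.1.1, p.1.2.1), ⟨p.1.2.2, p.2⟩⟩
    have hbij : Function.Bijective f := by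
      constructor
      · rintro ⟨⟨i, a⟩, ha⟩ ⟨⟨j, b⟩, hb⟩ h
        simp only [f, Subtype.mk.injEq, Prod.mk.injEq] at h
        obtain ⟨h1, h2⟩ := h
        subst h1
        exact Subtype.ext (Prod.ext rfl (Subtype.ext h2))
      · rintro ⟨⟨j, c⟩, hcS, hcW⟩
        exact ⟨⟨(j, ⟨c, hcS⟩), hcW⟩, rfl⟩
    refine ⟨⟨Equiv.ofBijective f hbij, ?_⟩⟩
    rintro ⟨⟨i, a⟩, ha⟩ ⟨⟨j, b⟩, hb⟩
    show ((((⊤ : SimpleGraph (Fin (l + 1))) □ G).induce S')).Adj (f _) (f _) ↔ _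
    constructor
    · rintro (⟨h1, h2⟩ | ⟨h1, h2⟩)
      · exact Or.inr ⟨h1, Subtype.ext h2⟩
      · exact Or.inl ⟨h2, h1⟩
    · rintro (⟨h1, h2⟩ | ⟨h1, h2⟩)
      · exact Or.inr ⟨h2, h1⟩
      · exact Or.inl ⟨h1, congrArg Subtype.val h2⟩


end Daisy
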